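/- Assume D = 0 and T = 1. Let a ∈ ℝ^L have all components strictly positive and satisfy Γ·a = c·𝟙 for some constant c > 0, and set N = κ + c. Then f is differentiable at a and its Jacobian matrix, with entries (∂f_i/∂a_j)(a), equals (1/N²)·d(a)·Γ·( c·I − d(a)·Γ ), where d(a) is the diagonal matrix with diagonal entries a_1,…,a_L and I is the identity matrix. -/

import Mathlib

open Finset Filter

/-- `auxN G κ a i = κ + ∑_{j ~ i} a_j`. -/
noncomputable def auxN {L : ℕ} (G : SimpleGraph (Fin L)) [DecidableRel G.Adj] (κ : ℝ)
    (a : Fin L → ℝ) (i : Fin L) : ℝ :=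
  κ + ∑ j ∈ G.neighborFinset i, a j

/-- The auxin transport vector field
`f_i(a) = D·∑_{k ~ i}(a_k − a_i) + T·∑_{k ~ i}(a_k·a_i/N_k(a) − a_i·a_k/N_i(a))`. -/
noncomputable def auxF {L : ℕ} (G : SimpleGraph (Fin L)) [DecidableRel G.Adj] (κ D T : ℝ)
    (a : Fin L → ℝ) (i : Fin L) : ℝ :=
  D * ∑ k ∈ G.neighborFinset i, (a k - a i) +
    T * ∑ k ∈ G.neighborFinset i,
      (a k * a i / auxN G κ a k - a i * a k / auxN G κ a i)

/-- For pure transport (`D = 0`, `T = 1`) at a positive critical point with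
`Γ·a = c·𝟙` and `N = κ + c`, the Jacobian of `f` at `a` is
`(1/N²)·d(a)·Γ·(c·I − d(a)·Γ)`. -/
theorem auxin_jacobian_at_critical {L : ℕ} (hL : 1 ≤ L) (G : SimpleGraph (Fin L))
    [DecidableRel G.Adj] (κ : ℝ) (hκ : 0 < κ)
    (a : Fin L → ℝ) (ha : ∀ i, 0 < a i)
    (c : ℝ) (hc : 0 < c) (hca : (G.adjMatrix ℝ).mulVec a = fun _ => c)
    (N : ℝ) (hN : N = κ + c) :
    HasFDerivAt (fun x => auxF G κ 0 1 x)
      (LinearMap.toContinuousLinearMap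
        (Matrix.mulVecLin
          ((1 / N ^ 2) •
            (Matrix.diagonal a * G.adjMatrix ℝ *
              (c • (1 : Matrix (Fin L) (Fin L) ℝ) -
                Matrix.diagonal a * G.adjMatrix ℝ))))) a := by
  have hNpos : 0 < N := by rw [hN]; positivity
  have hNne : N ≠ 0 := ne_of_gt hNpos
  have hsum : ∀ k, ∑ j ∈ G.neighborFinset k, a j = c := by
    intro k
    have := congrFun hca k
    simpa [SimpleGraph.adjMatrix_mulVec_apply] using this
  have haN : ∀ k, auxN G κ a k = N := by
    intro k; rw [auxN, hsum, hN]
  have haNne : ∀ k, auxN G κ a k ≠ 0 := fun k => by rw [haN]; exact hNne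
  -- rewrite the function
  have hfun : (fun x => auxF G κ 0 1 x) =
      fun x : Fin L → ℝ => fun i =>
        ∑ k ∈ G.neighborFinset i,
          (x k * x i * (auxN G κ x k)⁻¹ - x i * x k * (auxN G κ x i)⁻¹) := by
    funext x i
    simp [auxF, div_eq_mul_inv]
  rw [hfun]
  -- derivative of auxN
  let Pr : Fin L → (Fin L → ℝ) →L[ℝ] ℝ := fun j => ContinuousLinearMap.proj j
  have hPr : ∀ j, HasFDerivAt (fun x : Fin L → ℝ => x j) (Pr j) a :=
    fun j => hasFDerivAt_apply j a
  have hNder : ∀ k, HasFDerivAt (fun x : Fin L → ℝ => auxN G κ x k)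
      (∑ j ∈ G.neighborFinset k, Pr j) a := by
    intro k
    have h : HasFDerivAt (fun x : Fin L → ℝ => ∑ j ∈ G.neighborFinset k, x j)
        (∑ j ∈ G.neighborFinset k, Pr j) a :=
      HasFDerivAt.fun_sum fun j _ => hPr j
    exact h.const_add κ
  have hInv : ∀ k, HasFDerivAt (fun x : Fin L → ℝ => (auxN G κ x k)⁻¹)
      ((-ContinuousLinearMap.mulLeftRight ℝ ℝ (auxN G κ a k)⁻¹ (auxN G κ a k)⁻¹).comp
        (∑ j ∈ G.neighborFinset k, Pr j)) a := fun k =>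
    (hasFDerivAt_inv' (haNne k)).comp a (hNder k)
  rw [hasFDerivAt_pi']
  intro i
  have hder : HasFDerivAt
      (fun x : Fin L → ℝ => ∑ k ∈ G.neighborFinset i,
        (x k * x i * (auxN G κ x k)⁻¹ - x i * x k * (auxN G κ x i)⁻¹))
      (∑ k ∈ G.neighborFinset i,
        (((a k * a i) • ((-ContinuousLinearMap.mulLeftRight ℝ ℝ (auxN G κ a k)⁻¹ (auxN G κ a k)⁻¹).comp
              (∑ j ∈ G.neighborFinset k, Pr j)) +
            (auxN G κ a k)⁻¹ • (a k • Pr i +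
              a i • Pr k)) -
          ((a i * a k) • ((-ContinuousLinearMap.mulLeftRight ℝ ℝ (auxN G κ a i)⁻¹ (auxN G κ a i)⁻¹).comp
              (∑ j ∈ G.neighborFinset i, Pr j)) +
            (auxN G κ a i)⁻¹ • (a i • Pr k +
              a k • Pr i)))) a := by
    refine HasFDerivAt.fun_sum fun k _ => HasFDerivAt.sub ?_ ?_
    · exact ((hPr k).mul (hPr i)).mul (hInv k)
    · exact ((hPr i).mul (hPr k)).mul (hInv i)
  refine hder.congr_fderiv ?_
  ext v
  simp only [ContinuousLinearMap.sum_apply, ContinuousLinearMap.sub_apply,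
    ContinuousLinearMap.add_apply, ContinuousLinearMap.smul_apply,
    ContinuousLinearMap.comp_apply, ContinuousLinearMap.proj_apply,
    ContinuousLinearMap.neg_apply, ContinuousLinearMap.mulLeftRight_apply,
    ContinuousLinearMap.coe_comp', Function.comp_apply, smul_eq_mul,
    LinearMap.coe_toContinuousLinearMap', Matrix.mulVecLin_apply, haN, Pr]
  have hRHS : ((1 / N ^ 2) • (Matrix.diagonal a * SimpleGraph.adjMatrix ℝ G *
      (c • 1 - Matrix.diagonal a * SimpleGraph.adjMatrix ℝ G))).mulVec v i
      = 1 / N ^ 2 * (a i * ∑ k ∈ G.neighborFinset i,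
          (c * v k - a k * ∑ j ∈ G.neighborFinset k, v j)) := by
    rw [Matrix.smul_mulVec, Pi.smul_apply, smul_eq_mul,
      ← Matrix.mulVec_mulVec, ← Matrix.mulVec_mulVec, Matrix.mulVec_diagonal,
      SimpleGraph.adjMatrix_mulVec_apply]
    congr 2
    refine Finset.sum_congr rfl fun k _ => ?_
    rw [Matrix.sub_mulVec, Matrix.smul_mulVec, Matrix.one_mulVec, Pi.sub_apply,
      Pi.smul_apply, ← Matrix.mulVec_mulVec, Matrix.mulVec_diagonal,
      SimpleGraph.adjMatrix_mulVec_apply, smul_eq_mul]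
  rw [hRHS]
  have hterm : ∀ k ∈ G.neighborFinset i,
      (a k * a i * -((N⁻¹ * ∑ d ∈ G.neighborFinset k, v d) * N⁻¹) +
          N⁻¹ * (a k * v i + a i * v k) -
        (a i * a k * -((N⁻¹ * ∑ d ∈ G.neighborFinset i, v d) * N⁻¹) +
          N⁻¹ * (a i * v k + a k * v i)))
      = a i / N ^ 2 * (∑ j ∈ G.neighborFinset i, v j) * a k -
          a i / N ^ 2 * (a k * ∑ j ∈ G.neighborFinset k, v j) := by
    intro k _
    field_simp
    ring
  rw [Finset.sum_congr rfl hterm, Finset.sum_sub_distrib, ← Finset.mul_sum, hsum i,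
    Finset.sum_sub_distrib]
  simp only [← Finset.mul_sum]
  ring
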